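/- Let α satisfy assumptions (I)–(III) with degeneracy parameter μ, and assume 0 ≤ μ < 1. Then every u ∈ V¹_α(x₀,ℓ) extends to a continuous function on the closed interval [x₀,ℓ], and for all x₀ ≤ x < y ≤ ℓ one has |u(y) − u(x)| ≤ (∫_x^y α(s)⁻¹ ds)^{1/2} · (∫_x^y α(s)|u'(s)|² ds)^{1/2}. -/

import Mathlib

open MeasureTheory Set Filter Topology

/-- Assumptions (I)-(III) on the degenerate weight `α` on `[x₀, ℓ]`, with degeneracy
parameter `μ`: `α` is positive on `(x₀, ℓ]` and vanishes at `x₀`; `α` is continuous on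
`[x₀, ℓ]` and `C¹` on `(x₀, ℓ]` with derivative `α'`; and
`μ = sup_{x₀ < x ≤ ℓ} (x - x₀)|α'(x)|/α(x) = lim_{x → x₀⁺} (x - x₀)|α'(x)|/α(x) < 2`. -/
def DegWeight (x₀ ℓ μ : ℝ) (α α' : ℝ → ℝ) : Prop :=
  (∀ x ∈ Ioc x₀ ℓ, 0 < α x) ∧ α x₀ = 0 ∧
  ContinuousOn α (Icc x₀ ℓ) ∧
  (∀ x ∈ Ioc x₀ ℓ, HasDerivWithinAt α (α' x) (Ioc x₀ ℓ) x) ∧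
  ContinuousOn α' (Ioc x₀ ℓ) ∧
  IsLUB ((fun x => (x - x₀) * |α' x| / α x) '' Ioc x₀ ℓ) μ ∧
  Tendsto (fun x => (x - x₀) * |α' x| / α x) (𝓝[>] x₀) (𝓝 μ) ∧
  μ < 2

/-- `u ∈ V¹_α(x₀, ℓ)` (real-valued): `u ∈ L²(x₀, ℓ)`, `u` is locally absolutely continuous
on `(x₀, ℓ]` with a.e. derivative `u'` (expressed via the fundamental theorem of calculus on
compact subintervals of `(x₀, ℓ]`), and `√α · u' ∈ L²(x₀, ℓ)`. -/
def MemV1 (x₀ ℓ : ℝ) (α u u' : ℝ → ℝ) : Prop :=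
  MemLp u 2 (volume.restrict (Ioo x₀ ℓ)) ∧
  (∀ x y : ℝ, x₀ < x → x ≤ y → y ≤ ℓ →
    IntervalIntegrable u' volume x y ∧ u y - u x = ∫ t in x..y, u' t) ∧
  MemLp (fun x => Real.sqrt (α x) * u' x) 2 (volume.restrict (Ioo x₀ ℓ))

/-- If `α` satisfies (I)-(III) with degeneracy parameter `μ` and `0 ≤ μ < 1`,
then every `u ∈ V¹_α(x₀, ℓ)` extends to a continuous function `v` on `[x₀, ℓ]`, and for all
`x₀ ≤ x < y ≤ ℓ` one has
`|u(y) - u(x)| ≤ (∫_x^y α(s)⁻¹ ds)^{1/2} · (∫_x^y α(s)|u'(s)|² ds)^{1/2}`. -/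
theorem continuous_extension (x₀ ℓ μ : ℝ) (α α' : ℝ → ℝ) (hxl : x₀ < ℓ)
    (h : DegWeight x₀ ℓ μ α α') (hμ0 : 0 ≤ μ) (hμ1 : μ < 1)
    (u u' : ℝ → ℝ) (hu : MemV1 x₀ ℓ α u u') :
    ∃ v : ℝ → ℝ, ContinuousOn v (Icc x₀ ℓ) ∧ (∀ x ∈ Ioc x₀ ℓ, v x = u x) ∧
      ∀ x y : ℝ, x₀ ≤ x → x < y → y ≤ ℓ →
        |v y - v x| ≤ Real.sqrt (∫ s in Ioo x y, (α s)⁻¹) *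
          Real.sqrt (∫ s in Ioo x y, α s * (u' s) ^ 2) := by
  obtain ⟨hαpos, hα0, hαcont, hαderiv, hα'cont, hlub, htend, hμ2⟩ := h
  obtain ⟨huL2, hFTC, hw2⟩ := hu
  have hαℓ : 0 < α ℓ := hαpos ℓ ⟨hxl, le_rfl⟩
  have hℓx : (0:ℝ) < ℓ - x₀ := sub_pos.2 hxl
  set c : ℝ := α ℓ / (ℓ - x₀) ^ μ with hc_def
  have hcpos : 0 < c := div_pos hαℓ (Real.rpow_pos_of_pos hℓx μ)
  have hboundμ : ∀ s ∈ Ioc x₀ ℓ, (s - x₀) * |α' s| / α s ≤ μ := fun s hs =>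
    hlub.1 ⟨s, hs, rfl⟩
  have hαpos_Ioo : ∀ s ∈ Ioo x₀ ℓ, 0 < α s := fun s hs => hαpos s ⟨hs.1, hs.2.le⟩
  -- Step 1: lower bound α x ≥ c * (x - x₀)^μ on (x₀, ℓ]
  have hlow : ∀ x ∈ Ioc x₀ ℓ, c * (x - x₀) ^ μ ≤ α x := by
    set F : ℝ → ℝ := fun s => Real.log (α s) - μ * Real.log (s - x₀) with hF
    have hders : ∀ s ∈ Ioo x₀ ℓ, HasDerivAt F (α' s / α s - μ * (1 / (s - x₀))) s := by
      intro s hs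
      have hsIoc : s ∈ Ioc x₀ ℓ := Ioo_subset_Ioc_self hs
      have h1 : HasDerivAt α (α' s) s :=
        (hαderiv s hsIoc).hasDerivAt (Ioc_mem_nhds hs.1 hs.2)
      have h2 : HasDerivAt (fun y => Real.log (α y)) (α' s / α s) s :=
        h1.log (hαpos s hsIoc).ne'
      have h3 : HasDerivAt (fun y : ℝ => y - x₀) 1 s := (hasDerivAt_id s).sub_const x₀
      have h4 : HasDerivAt (fun y : ℝ => Real.log (y - x₀)) (1 / (s - x₀)) s := by
        simpa using h3.log (sub_ne_zero.2 (ne_of_gt hs.1))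
      exact h2.sub (h4.const_mul μ)
    have hFanti : AntitoneOn F (Ioc x₀ ℓ) := by
      apply antitoneOn_of_deriv_nonpos (convex_Ioc _ _)
      · apply ContinuousOn.sub
        · exact (hαcont.mono Ioc_subset_Icc_self).log fun s hs => (hαpos s hs).ne'
        · exact continuousOn_const.mul
            ((continuousOn_id.sub continuousOn_const).log
              fun s hs => (sub_pos.2 hs.1).ne')
      · intro s hs
        rw [interior_Ioc] at hs
        exact (hders s hs).differentiableAt.differentiableWithinAt
      · intro s hs
        rw [interior_Ioc] at hs
        rw [(hders s hs).deriv]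
        have hsIoc : s ∈ Ioc x₀ ℓ := Ioo_subset_Ioc_self hs
        have hspos := hαpos s hsIoc
        have hsx : 0 < s - x₀ := sub_pos.2 hs.1
        have key : (s - x₀) * |α' s| ≤ μ * α s := (div_le_iff₀ hspos).1 (hboundμ s hsIoc)
        rw [sub_nonpos, div_le_iff₀ hspos]
        calc α' s ≤ |α' s| := le_abs_self _
          _ = (s - x₀) * |α' s| * (s - x₀)⁻¹ := by field_simp
          _ ≤ μ * α s * (s - x₀)⁻¹ := by gcongr
          _ = μ * (1 / (s - x₀)) * α s := by field_simp
    intro x hx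
    have hFle : F ℓ ≤ F x := hFanti hx (right_mem_Ioc.2 hxl) hx.2
    have hxpos : 0 < x - x₀ := sub_pos.2 hx.1
    have hαx : 0 < α x := hαpos x hx
    rw [← Real.log_le_log_iff (mul_pos hcpos (Real.rpow_pos_of_pos hxpos μ)) hαx]
    have hlogc : Real.log (c * (x - x₀) ^ μ)
        = Real.log (α ℓ) - μ * Real.log (ℓ - x₀) + μ * Real.log (x - x₀) := by
      rw [Real.log_mul hcpos.ne' (Real.rpow_pos_of_pos hxpos μ).ne', hc_def,
        Real.log_div hαℓ.ne' (Real.rpow_pos_of_pos hℓx μ).ne',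
        Real.log_rpow hℓx, Real.log_rpow hxpos]
    rw [hlogc]
    simp only [hF] at hFle
    linarith
  -- Step 2: integrability of α⁻¹ on Ioo x₀ ℓ
  have hαinv_contOn : ContinuousOn (fun s => (α s)⁻¹) (Ioc x₀ ℓ) :=
    (hαcont.mono Ioc_subset_Icc_self).inv₀ fun s hs => (hαpos s hs).ne'
  have hαinv_meas : AEStronglyMeasurable (fun s => (α s)⁻¹) (volume.restrict (Ioo x₀ ℓ)) :=
    (hαinv_contOn.mono Ioo_subset_Ioc_self).aestronglyMeasurable measurableSet_Ioo
  have hrpow : IntegrableOn (fun s => c⁻¹ * (s - x₀) ^ (-μ)) (Ioo x₀ ℓ) volume := by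
    have h1 : IntervalIntegrable (fun s : ℝ => s ^ (-μ)) volume 0 (ℓ - x₀) :=
      intervalIntegral.intervalIntegrable_rpow' (by linarith)
    have h2 : IntervalIntegrable (fun s : ℝ => (s - x₀) ^ (-μ)) volume x₀ ℓ := by
      simpa using h1.comp_sub_right x₀
    exact (intervalIntegrable_iff_integrableOn_Ioo_of_le hxl.le).1 (h2.const_mul c⁻¹)
  have hinv_int : IntegrableOn (fun s => (α s)⁻¹) (Ioo x₀ ℓ) volume := by
    refine Integrable.mono' hrpow hαinv_meas ?_
    rw [ae_restrict_iff' measurableSet_Ioo]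
    refine ae_of_all _ fun s hs => ?_
    have hsx : 0 < s - x₀ := sub_pos.2 hs.1
    have hαs : 0 < α s := hαpos_Ioo s hs
    have hl := hlow s ⟨hs.1, hs.2.le⟩
    rw [Real.norm_eq_abs, abs_of_pos (inv_pos.2 hαs), Real.rpow_neg hsx.le]
    calc (α s)⁻¹ ≤ (c * (s - x₀) ^ μ)⁻¹ := by
          apply inv_anti₀ (mul_pos hcpos (Real.rpow_pos_of_pos hsx μ)) hl
      _ = c⁻¹ * ((s - x₀) ^ μ)⁻¹ := mul_inv c _
  -- Step 3: integrability of α u'^2 on Ioo x₀ ℓ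
  have hαu2_int : IntegrableOn (fun s => α s * u' s ^ 2) (Ioo x₀ ℓ) volume := by
    refine hw2.integrable_sq.congr ?_
    rw [Filter.EventuallyEq, ae_restrict_iff' measurableSet_Ioo]
    refine ae_of_all _ fun s hs => ?_
    rw [mul_pow, Real.sq_sqrt (hαpos_Ioo s hs).le]
  -- Step 4: u' measurable and integrable on Ioo x₀ ℓ
  have hw_meas := hw2.aestronglyMeasurable
  have hsqrtinv_cont : ContinuousOn (fun s => (Real.sqrt (α s))⁻¹) (Ioc x₀ ℓ) := by
    apply ContinuousOn.inv₀
    · exact Real.continuous_sqrt.comp_continuousOn (hαcont.mono Ioc_subset_Icc_self)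
    · exact fun s hs => (Real.sqrt_pos.2 (hαpos s hs)).ne'
  have hu'_meas : AEStronglyMeasurable u' (volume.restrict (Ioo x₀ ℓ)) := by
    have h1 : AEStronglyMeasurable
        (fun s => (Real.sqrt (α s))⁻¹ * (Real.sqrt (α s) * u' s))
        (volume.restrict (Ioo x₀ ℓ)) :=
      (((hsqrtinv_cont.mono Ioo_subset_Ioc_self).aestronglyMeasurable
        measurableSet_Ioo)).mul hw_meas
    refine h1.congr ?_
    rw [Filter.EventuallyEq, ae_restrict_iff' measurableSet_Ioo]
    refine ae_of_all _ fun s hs => ?_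
    have hne : Real.sqrt (α s) ≠ 0 := (Real.sqrt_pos.2 (hαpos_Ioo s hs)).ne'
    field_simp
  have hu'_int : IntegrableOn u' (Ioo x₀ ℓ) volume := by
    refine Integrable.mono' ((hinv_int.add hαu2_int).const_mul 2⁻¹) hu'_meas ?_
    rw [ae_restrict_iff' measurableSet_Ioo]
    refine ae_of_all _ fun s hs => ?_
    have hαs := hαpos_Ioo s hs
    have key : α s * (α s)⁻¹ = 1 := mul_inv_cancel₀ hαs.ne'
    rw [Real.norm_eq_abs]
    simp only [Pi.add_apply]
    nlinarith [mul_nonneg hαs.le (sq_nonneg (|u' s| - (α s)⁻¹)), key, sq_abs (u' s),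
      abs_nonneg (u' s), inv_nonneg.2 hαs.le]
  have hu'_Icc : IntegrableOn u' (Icc x₀ ℓ) volume := by
    rw [IntegrableOn, ← Measure.restrict_congr_set Ioo_ae_eq_Icc]
    exact hu'_int
  have hII : ∀ a b : ℝ, x₀ ≤ a → a ≤ b → b ≤ ℓ → IntervalIntegrable u' volume a b := by
    intro a b ha hab hb
    refine IntegrableOn.intervalIntegrable ?_
    rw [uIcc_of_le hab]
    exact hu'_Icc.mono_set (Icc_subset_Icc ha hb)
  -- the extension v
  set v : ℝ → ℝ := fun x => u ℓ - ∫ t in x..ℓ, u' t with hv_def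
  have hprim : ContinuousOn (fun x => ∫ t in x..ℓ, u' t) (Icc x₀ ℓ) := by
    have := intervalIntegral.continuousOn_primitive_interval_left (a := x₀) (b := ℓ) (f := u') (μ := volume)
      (by rw [uIcc_of_le hxl.le]; exact hu'_Icc)
    rwa [uIcc_of_le hxl.le] at this
  have hvcont : ContinuousOn v (Icc x₀ ℓ) := continuousOn_const.sub hprim
  have hveq : ∀ x ∈ Ioc x₀ ℓ, v x = u x := by
    intro x hx
    have h2 := (hFTC x ℓ hx.1 hx.2 le_rfl).2
    show u ℓ - ∫ t in x..ℓ, u' t = u x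
    rw [← h2]; ring
  refine ⟨v, hvcont, hveq, ?_⟩
  intro x y hx hxy hyl
  have hsub : Ioo x y ⊆ Ioo x₀ ℓ := Ioo_subset_Ioo hx hyl
  have hinv_xy : IntegrableOn (fun s => (α s)⁻¹) (Ioo x y) volume := hinv_int.mono_set hsub
  have hαu2_xy : IntegrableOn (fun s => α s * u' s ^ 2) (Ioo x y) volume :=
    hαu2_int.mono_set hsub
  have hrle : volume.restrict (Ioo x y) ≤ volume.restrict (Ioo x₀ ℓ) :=
    Measure.restrict_mono hsub le_rfl
  have hvdiff : v y - v x = ∫ t in x..y, u' t := by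
    have h1 := intervalIntegral.integral_add_adjacent_intervals
      (hII x y hx hxy.le hyl) (hII y ℓ (hx.trans hxy.le) hyl le_rfl)
    show (u ℓ - ∫ t in y..ℓ, u' t) - (u ℓ - ∫ t in x..ℓ, u' t) = ∫ t in x..y, u' t
    linarith
  have habs : |v y - v x| ≤ ∫ s in Ioo x y, |u' s| := by
    rw [hvdiff, intervalIntegral.integral_of_le hxy.le, integral_Ioc_eq_integral_Ioo]
    simpa [Real.norm_eq_abs] using
      norm_integral_le_integral_norm (f := u') (μ := volume.restrict (Ioo x y))
  have hconj : Real.HolderConjugate 2 2 := Real.HolderConjugate.two_two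
  have hf_meas : AEStronglyMeasurable (fun s => Real.sqrt ((α s)⁻¹))
      (volume.restrict (Ioo x y)) := by
    have : ContinuousOn (fun s => Real.sqrt ((α s)⁻¹)) (Ioc x₀ ℓ) :=
      Real.continuous_sqrt.comp_continuousOn hαinv_contOn
    exact (this.mono (hsub.trans Ioo_subset_Ioc_self)).aestronglyMeasurable measurableSet_Ioo
  have hg_meas : AEStronglyMeasurable (fun s => Real.sqrt (α s * u' s ^ 2))
      (volume.restrict (Ioo x y)) := by
    have h1 : AEStronglyMeasurable (fun s => α s * u' s ^ 2) (volume.restrict (Ioo x y)) := by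
      have hα : AEStronglyMeasurable α (volume.restrict (Ioo x y)) :=
        ((hαcont.mono (hsub.trans (Ioo_subset_Ioc_self.trans Ioc_subset_Icc_self)))
          |>.aestronglyMeasurable measurableSet_Ioo)
      exact hα.mul ((hu'_meas.mono_measure hrle).mul (hu'_meas.mono_measure hrle) |>.congr
        (ae_of_all _ fun s => by simp [Pi.mul_apply, sq]))
    exact Real.continuous_sqrt.comp_aestronglyMeasurable h1
  have hf2 : MemLp (fun s => Real.sqrt ((α s)⁻¹)) (ENNReal.ofReal 2)
      (volume.restrict (Ioo x y)) := by
    rw [ENNReal.ofReal_ofNat]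
    refine (memLp_two_iff_integrable_sq hf_meas).2 ?_
    refine hinv_xy.congr ?_
    rw [Filter.EventuallyEq, ae_restrict_iff' measurableSet_Ioo]
    refine ae_of_all _ fun s hs => ?_
    rw [Real.sq_sqrt (inv_nonneg.2 (hαpos_Ioo s (hsub hs)).le)]
  have hg2 : MemLp (fun s => Real.sqrt (α s * u' s ^ 2)) (ENNReal.ofReal 2)
      (volume.restrict (Ioo x y)) := by
    rw [ENNReal.ofReal_ofNat]
    refine (memLp_two_iff_integrable_sq hg_meas).2 ?_
    refine hαu2_xy.congr ?_
    rw [Filter.EventuallyEq, ae_restrict_iff' measurableSet_Ioo]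
    refine ae_of_all _ fun s hs => ?_
    rw [Real.sq_sqrt (mul_nonneg (hαpos_Ioo s (hsub hs)).le (sq_nonneg _))]
  have hH := integral_mul_le_Lp_mul_Lq_of_nonneg hconj
    (ae_of_all _ fun s => Real.sqrt_nonneg ((α s)⁻¹))
    (ae_of_all _ fun s => Real.sqrt_nonneg (α s * u' s ^ 2)) hf2 hg2
  have heq1 : ∫ s in Ioo x y, Real.sqrt ((α s)⁻¹) * Real.sqrt (α s * u' s ^ 2)
      = ∫ s in Ioo x y, |u' s| := by
    refine setIntegral_congr_fun measurableSet_Ioo fun s hs => ?_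
    have hαs : 0 < α s := hαpos_Ioo s (hsub hs)
    rw [← Real.sqrt_mul (inv_nonneg.2 hαs.le)]
    rw [show (α s)⁻¹ * (α s * u' s ^ 2) = u' s ^ 2 by field_simp]
    exact Real.sqrt_sq_eq_abs _
  have heq2 : ∫ s in Ioo x y, Real.sqrt ((α s)⁻¹) ^ (2:ℝ) = ∫ s in Ioo x y, (α s)⁻¹ := by
    refine setIntegral_congr_fun measurableSet_Ioo fun s hs => ?_
    have hαs : 0 < α s := hαpos_Ioo s (hsub hs)
    rw [show ((2:ℝ) = ((2:ℕ):ℝ)) by norm_num, Real.rpow_natCast,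
      Real.sq_sqrt (inv_nonneg.2 hαs.le)]
  have heq3 : ∫ s in Ioo x y, Real.sqrt (α s * u' s ^ 2) ^ (2:ℝ)
      = ∫ s in Ioo x y, α s * u' s ^ 2 := by
    refine setIntegral_congr_fun measurableSet_Ioo fun s hs => ?_
    have hαs : 0 < α s := hαpos_Ioo s (hsub hs)
    rw [show ((2:ℝ) = ((2:ℕ):ℝ)) by norm_num, Real.rpow_natCast,
      Real.sq_sqrt (mul_nonneg hαs.le (sq_nonneg _))]
  rw [heq1, heq2, heq3] at hH
  calc |v y - v x| ≤ ∫ s in Ioo x y, |u' s| := habs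
    _ ≤ (∫ s in Ioo x y, (α s)⁻¹) ^ (1/(2:ℝ)) *
        (∫ s in Ioo x y, α s * u' s ^ 2) ^ (1/(2:ℝ)) := hH
    _ = Real.sqrt (∫ s in Ioo x y, (α s)⁻¹) *
        Real.sqrt (∫ s in Ioo x y, α s * (u' s) ^ 2) := by
      rw [Real.sqrt_eq_rpow, Real.sqrt_eq_rpow]
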